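/- arXiv:2201.00782 — 2 statements merged into one kernel-verified Lean document; each statement's English description precedes it below -/
import Mathlib

section
/- Let w_n = |W_{3/2,n}| be the number of binary words of length n such that every maximal factor of the form 0^a 1^b with a > 0 satisfies 3a > 2b. Then w_n = w_{n-1} + w_{n-2} + w_{n-4} + w_{n-5} for all n ≥ 5, and the sequence begins 1, 2, 4, 7, 13, 23, 42, 76, 138. -/
/-- `isValid c d w` says every maximal factor of `w` of the form `0^a 1^b`
with `a > 0` satisfies `a * (c/d) > b`, i.e. `c*a > d*b`.
Here `false` plays the role of `0` and `true` of `1`; maximality is expressed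
by requiring the prefix to end with `1` (or be empty) and the suffix to start
with `0` (or be empty). -/
def isValid (c d : ℕ) (w : List Bool) : Prop :=
  ∀ p s : List Bool, ∀ a b : ℕ,
    w = p ++ List.replicate a false ++ List.replicate b true ++ s →
    (p = [] ∨ p.getLast? = some true) →
    (s = [] ∨ s.head? = some false) →
    0 < a → d * b < c * a

/-- number of words of length `n` in `W_{c/d,n}` -/
noncomputable def wcount (c d n : ℕ) : ℕ :=
  Nat.card {w : List Bool // w.length = n ∧ isValid c d w}


open List

/-- count of leading `false`s -/
def lf : List Bool → ℕ
  | [] => 0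
  | false :: t => lf t + 1
  | true :: _ => 0

/-- drop leading `false`s -/
def df : List Bool → List Bool
  | [] => []
  | false :: t => df t
  | true :: t => true :: t

/-- count of leading `true`s -/
def lt' : List Bool → ℕ
  | [] => 0
  | true :: t => lt' t + 1
  | false :: _ => 0

/-- drop leading `true`s -/
def dt : List Bool → List Bool
  | [] => []
  | true :: t => dt t
  | false :: t => false :: t

lemma lf_spec (w : List Bool) : w = List.replicate (lf w) false ++ df w := by
  induction w with
  | nil => rfl
  | cons x t ih => cases x <;> simp [lf, df, List.replicate_succ] <;> exact ih

lemma df_head (w : List Bool) : (df w).head? ≠ some false := by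
  induction w with
  | nil => simp [df]
  | cons x t ih => cases x <;> simp [df] <;> exact ih

lemma lt'_spec (w : List Bool) : w = List.replicate (lt' w) true ++ dt w := by
  induction w with
  | nil => rfl
  | cons x t ih => cases x <;> simp [lt', dt, List.replicate_succ] <;> exact ih

lemma dt_head (w : List Bool) : (dt w).head? ≠ some true := by
  induction w with
  | nil => simp [dt]
  | cons x t ih => cases x <;> simp [dt] <;> exact ih

lemma lf_rep_append (A : ℕ) (r : List Bool) (h : r.head? ≠ some false) :
    lf (List.replicate A false ++ r) = A := by
  induction A with
  | zero =>
    simp only [List.replicate_zero, List.nil_append]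
    cases r with
    | nil => rfl
    | cons x t =>
      cases x
      · simp at h
      · rfl
  | succ n ih => simp [List.replicate_succ, lf, ih]

lemma lt'_rep_append (A : ℕ) (r : List Bool) (h : r.head? ≠ some true) :
    lt' (List.replicate A true ++ r) = A := by
  induction A with
  | zero =>
    simp only [List.replicate_zero, List.nil_append]
    cases r with
    | nil => rfl
    | cons x t =>
      cases x
      · rfl
      · simp at h
  | succ n ih => simp [List.replicate_succ, lt', ih]

/-- uniqueness of maximal-block decompositions -/
lemma uniq {A B a b : ℕ} {z s : List Bool} (hB : 1 ≤ B) (hb : 1 ≤ b)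
    (hz : z.head? ≠ some true) (hs : s.head? ≠ some true)
    (h : List.replicate A false ++ List.replicate B true ++ z
       = List.replicate a false ++ List.replicate b true ++ s) :
    A = a ∧ B = b ∧ z = s := by
  have hA : A = a := by
    have h1 := lf_rep_append A (List.replicate B true ++ z) (by
      cases B with
      | zero => omega
      | succ n => simp [List.replicate_succ])
    have h2 := lf_rep_append a (List.replicate b true ++ s) (by
      cases b with
      | zero => omega
      | succ n => simp [List.replicate_succ])
    rw [List.append_assoc, List.append_assoc] at h
    rw [h] at h1
    rw [← h1, h2]
  subst hA
  rw [List.append_assoc, List.append_assoc] at h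
  have h' : List.replicate B true ++ z = List.replicate b true ++ s :=
    List.append_cancel_left h
  have hBb : B = b := by
    have h1 := lt'_rep_append B z hz
    have h2 := lt'_rep_append b s hs
    rw [h'] at h1; rw [← h1, h2]
  subst hBb
  exact ⟨rfl, rfl, List.append_cancel_left h'⟩

/-- Grammar for valid "Z-words": sequences of maximal blocks `0^a 1^b`. -/
inductive ZV : List Bool → Prop
  | nil : ZV []
  | blk (a b : ℕ) (w : List Bool) : 1 ≤ a → 2 * b < 3 * a → (b = 0 → w = []) → ZV w →
      ZV (List.replicate a false ++ List.replicate b true ++ w)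

/-- Valid words: some leading ones followed by a Z-word. -/
def Vp (w : List Bool) : Prop := ∃ k z, w = List.replicate k true ++ z ∧ ZV z

lemma ZV_head {z : List Bool} (h : ZV z) : z.head? ≠ some true := by
  cases h with
  | nil => simp
  | blk a b w ha hab hb hw =>
    cases a with
    | zero => omega
    | succ n => simp [List.replicate_succ]

lemma idx_false {A B i : ℕ} (h : (List.replicate A false ++ List.replicate B true)[i]? = some false) :
    i < A := by
  rw [List.getElem?_append] at h
  by_contra hc
  simp only [List.length_replicate] at h
  rw [if_neg (by omega)] at h
  rw [List.getElem?_replicate] at h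
  split at h <;> simp_all

lemma idx_true {A B i : ℕ} (h : (List.replicate A false ++ List.replicate B true)[i]? = some true) :
    A ≤ i := by
  rw [List.getElem?_append] at h
  by_contra hc
  simp only [List.length_replicate] at h
  rw [if_pos (by omega)] at h
  rw [List.getElem?_replicate] at h
  split at h <;> simp_all

lemma getLast?_rep_true {B : ℕ} (hB : 1 ≤ B) :
    (List.replicate B true).getLast? = some true := by
  cases B with
  | zero => omega
  | succ n => rw [List.replicate_succ']; exact List.getLast?_concat

lemma Vp_isValid : ∀ n (w : List Bool), w.length ≤ n → Vp w → isValid 3 2 w := by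
  intro n
  induction n with
  | zero =>
    intro w hw _ p s a b heq hp hs ha
    have hw0 : w = [] := List.eq_nil_of_length_eq_zero (Nat.le_zero.mp hw)
    rw [hw0] at heq
    have := congrArg List.length heq
    simp at this
    omega
  | succ n ih =>
    intro w hw hVp p s a b heq hp hs ha
    obtain ⟨k, z, hwz, hz⟩ := hVp
    cases k with
    | succ k =>
      subst hwz
      rw [List.replicate_succ] at heq hw
      cases p with
      | nil =>
        exfalso
        simp only [List.nil_append] at heq
        have h0 := congrArg (·[0]?) heq
        cases a with
        | zero => omega
        | succ m =>
          simp [List.replicate_succ] at h0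
      | cons x p' =>
        have hx : x = true := by
          have h0 := congrArg (·[0]?) heq
          simp at h0
          exact h0
        subst hx
        have heq' : List.replicate k true ++ z
            = p' ++ List.replicate a false ++ List.replicate b true ++ s := by
          simp only [List.cons_append] at heq
          exact List.tail_eq_of_cons_eq heq
        have hp' : p' = [] ∨ p'.getLast? = some true := by
          cases p' with
          | nil => exact Or.inl rfl
          | cons y t =>
            right
            rcases hp with h | h
            · simp at h
            · rwa [List.getLast?_cons_cons] at h
        exact ih (List.replicate k true ++ z) (by simp at hw ⊢; omega)
          ⟨k, z, rfl, hz⟩ p' s a b heq' hp' hs ha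
    | zero =>
      simp only [List.replicate_zero, List.nil_append] at hwz
      subst hwz
      cases hz with
      | nil =>
        exfalso
        have := congrArg List.length heq
        simp at this
        omega
      | blk A B z₀ hA hAB hB0 hz₀ =>
        rcases hp with hpnil | hpl
        · -- p = []
          subst hpnil
          simp only [List.nil_append] at heq
          rcases Nat.eq_zero_or_pos b with hb | hb
          · subst hb; omega
          · rcases Nat.eq_zero_or_pos B with hB | hB
            · exfalso
              have hz0 : z₀ = [] := hB0 hB
              subst hB hz0
              simp only [List.replicate_zero, List.append_nil] at heq
              have : (true : Bool) ∈ List.replicate A false := by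
                rw [heq]
                refine List.mem_append.mpr (Or.inl ?_)
                refine List.mem_append.mpr (Or.inr ?_)
                cases b with
                | zero => omega
                | succ m => simp [List.replicate_succ]
              simp [List.mem_replicate] at this
            · have hshead : s.head? ≠ some true := by
                rcases hs with h | h <;> simp [h]
              obtain ⟨h1, h2, h3⟩ := uniq hB hb (ZV_head hz₀) hshead heq
              omega
        · -- p ≠ [], ends with true
          have hpne : p ≠ [] := by
            intro hc; subst hc; simp at hpl
          have heq2 : (List.replicate A false ++ List.replicate B true) ++ z₀
              = p ++ (List.replicate a false ++ List.replicate b true ++ s) := by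
            rw [heq]; simp [List.append_assoc]
          rcases List.append_eq_append_iff.mp heq2 with ⟨a', h1, h2⟩ | ⟨c', h1, h2⟩
          · -- p = (rep A f ++ rep B t) ++ a', z₀ = a' ++ t
            have hlen : z₀.length ≤ n := by
              have := congrArg List.length heq2
              simp at this hw
              omega
            have ha' : a' = [] ∨ a'.getLast? = some true := by
              cases a' with
              | nil => exact Or.inl rfl
              | cons y t =>
                right
                rw [h1, List.getLast?_append_of_ne_nil _ (by simp)] at hpl
                exact hpl
            exact ih z₀ hlen ⟨0, z₀, by simp, hz₀⟩ a' s a b (by rw [h2]; simp [List.append_assoc]) ha' hs ha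
          · -- rep A f ++ rep B t = p ++ c', t = c' ++ z₀
            cases c' with
            | nil =>
              simp only [List.append_nil] at h1
              simp only [List.nil_append] at h2
              have hlen : z₀.length ≤ n := by
                have := congrArg List.length heq2
                simp at this hw
                omega
              exact ih z₀ hlen ⟨0, z₀, by simp, hz₀⟩ [] s a b (by rw [← h2]; simp [List.append_assoc]) (Or.inl rfl) hs ha
            | cons y c'' =>
              exfalso
              -- y = false since t starts with false
              have hy : y = false := by
                have h0 := congrArg (·[0]?) h2
                cases a with
                | zero => omega
                | succ m =>
                  simp [List.replicate_succ] at h0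
                  exact h0
              subst hy
              -- position p.length in (rep A f ++ rep B t) is false : p.length < A
              have hfalse : (List.replicate A false ++ List.replicate B true)[p.length]? = some false := by
                rw [h1, List.getElem?_append_right (le_refl _)]
                simp
              have hAlt : p.length < A := idx_false hfalse
              -- position p.length - 1 is true : A ≤ p.length - 1
              have hp1 : 1 ≤ p.length := by
                cases p with
                | nil => simp at hpne
                | cons _ _ => simp
              have htrue : (List.replicate A false ++ List.replicate B true)[p.length - 1]? = some true := by
                rw [h1, List.getElem?_append, if_pos (by omega)]
                rw [← List.getLast?_eq_getElem?]
                exact hpl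
              have := idx_true htrue
              omega

lemma lf_cons_false (w : List Bool) : lf (false :: w) = lf w + 1 := rfl

lemma isValid_Vp : ∀ n (w : List Bool), w.length ≤ n → isValid 3 2 w → Vp w := by
  intro n
  induction n with
  | zero =>
    intro w hw _
    have hw0 : w = [] := List.eq_nil_of_length_eq_zero (Nat.le_zero.mp hw)
    exact ⟨0, [], by simp [hw0], ZV.nil⟩
  | succ n ih =>
    intro w hw hV
    cases w with
    | nil => exact ⟨0, [], by simp, ZV.nil⟩
    | cons x w' =>
      cases x with
      | true =>
        have hV' : isValid 3 2 w' := by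
          intro p s a b heq hp hs ha
          refine hV (true :: p) s a b (by simp [heq]) ?_ hs ha
          right
          cases p with
          | nil => rfl
          | cons y t =>
            rw [List.getLast?_cons_cons]
            rcases hp with h | h
            · simp at h
            · exact h
        obtain ⟨k, z, h1, h2⟩ := ih w' (by simp at hw; omega) hV'
        exact ⟨k + 1, z, by simp [h1, List.replicate_succ], h2⟩
      | false =>
        set A := lf (false :: w') with hAdef
        set r := df (false :: w') with hrdef
        set B := lt' r with hBdef
        set z₀ := dt r with hz₀def
        have hdecomp : (false :: w') = List.replicate A false ++ (List.replicate B true ++ z₀) := by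
          conv_lhs => rw [lf_spec (false :: w')]
          rw [← hAdef, ← hrdef]
          congr 1
          conv_lhs => rw [lt'_spec r]
        have hA : 1 ≤ A := by rw [hAdef, lf_cons_false]; omega
        have hz₀h : z₀.head? ≠ some true := dt_head r
        have hz₀s : z₀ = [] ∨ z₀.head? = some false := by
          cases hz : z₀ with
          | nil => exact Or.inl rfl
          | cons y t =>
            right
            cases y with
            | false => rfl
            | true => rw [hz] at hz₀h; simp at hz₀h
        have hB0 : B = 0 → z₀ = [] := by
          intro hB
          have hrh := df_head (false :: w')
          rw [← hrdef] at hrh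
          cases hr : r with
          | nil => rw [hz₀def, hr]; rfl
          | cons y t =>
            cases y with
            | false => rw [hr] at hrh; simp at hrh
            | true => rw [hBdef, hr] at hB; simp [lt'] at hB
        have hmain : 2 * B < 3 * A :=
          hV [] z₀ A B (by simpa using hdecomp) (Or.inl rfl) hz₀s (by omega)
        have hlenw : (false :: w').length = A + B + z₀.length := by
          rw [hdecomp]; simp; omega
        have hzV : ZV z₀ := by
          rcases Nat.eq_zero_or_pos B with hB | hB
          · rw [hB0 hB]; exact ZV.nil
          · have hval : isValid 3 2 z₀ := by
              intro p s a b heq hp hs ha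
              refine hV (List.replicate A false ++ List.replicate B true ++ p) s a b ?_ ?_ hs ha
              · rw [hdecomp, heq]; simp [List.append_assoc]
              · right
                cases p with
                | nil =>
                  simp only [List.append_nil]
                  rw [List.getLast?_append_of_ne_nil _ (by
                    simp only [ne_eq, List.replicate_eq_nil_iff]
                    omega)]
                  exact getLast?_rep_true hB
                | cons y t =>
                  rw [List.getLast?_append_of_ne_nil _ (by simp)]
                  rcases hp with h | h
                  · simp at h
                  · exact h
            obtain ⟨k, z, h1, h2⟩ := ih z₀
              (by have h := hlenw; simp only [List.length_cons] at h hw; omega) hval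
            cases k with
            | zero => rw [h1]; simpa using h2
            | succ m =>
              exfalso
              rw [h1, List.replicate_succ] at hz₀h
              simp at hz₀h
        exact ⟨0, _, by simpa using hdecomp,
          by rw [← List.append_assoc] at hdecomp ⊢
             exact ZV.blk A B z₀ hA hmain hB0 hzV⟩

lemma isValid_iff_Vp (w : List Bool) : isValid 3 2 w ↔ Vp w :=
  ⟨fun h => isValid_Vp w.length w le_rfl h, fun h => Vp_isValid w.length w le_rfl h⟩

/-- all binary words of length `n` -/
def allL : ℕ → Finset (List Bool)
  | 0 => {([] : List Bool)}
  | n + 1 => ((allL n).image (true :: ·)) ∪ ((allL n).image (false :: ·))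

lemma mem_allL : ∀ n (w : List Bool), w ∈ allL n ↔ w.length = n := by
  intro n
  induction n with
  | zero => intro w; cases w <;> simp [allL]
  | succ n ih =>
    intro w
    cases w with
    | nil => simp [allL]
    | cons x t => cases x <;> simp [allL, ih] <;> omega

open Classical in
noncomputable def Zf (n : ℕ) : Finset (List Bool) := (allL n).filter (fun w => ZV w)

open Classical in
noncomputable def Vf (n : ℕ) : Finset (List Bool) := (allL n).filter (fun w => Vp w)

noncomputable def U (n : ℕ) : ℕ := (Zf n).card
noncomputable def W (n : ℕ) : ℕ := (Vf n).card

lemma mem_Zf {n : ℕ} {w : List Bool} : w ∈ Zf n ↔ w.length = n ∧ ZV w := by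
  simp [Zf, Finset.mem_filter, mem_allL]

lemma mem_Vf {n : ℕ} {w : List Bool} : w ∈ Vf n ↔ w.length = n ∧ Vp w := by
  simp [Vf, Finset.mem_filter, mem_allL]

def Pn (n : ℕ) : Finset (ℕ × ℕ) :=
  (Finset.range (n + 1) ×ˢ Finset.range (n + 1)).filter
    (fun p => 1 ≤ p.1 ∧ 1 ≤ p.2 ∧ 2 * p.2 < 3 * p.1 ∧ p.1 + p.2 ≤ n)

lemma mem_Pn {n a b : ℕ} : (a, b) ∈ Pn n ↔ 1 ≤ a ∧ 1 ≤ b ∧ 2 * b < 3 * a ∧ a + b ≤ n := by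
  simp only [Pn, Finset.mem_filter, Finset.mem_product, Finset.mem_range]
  omega

lemma Zf_decomp (n : ℕ) (hn : 1 ≤ n) :
    Zf n = insert (List.replicate n false)
      ((Pn n).biUnion (fun p => (Zf (n - (p.1 + p.2))).image
        (fun w => List.replicate p.1 false ++ List.replicate p.2 true ++ w))) := by
  ext w
  simp only [Finset.mem_insert, Finset.mem_biUnion, Finset.mem_image, mem_Zf]
  constructor
  · rintro ⟨hlen, hzv⟩
    cases hzv with
    | nil => simp at hlen; omega
    | blk A B z₀ hA hAB hB0 hz₀ =>
      rcases Nat.eq_zero_or_pos B with hB | hB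
      · left
        have hz0 : z₀ = [] := hB0 hB
        subst hB hz0
        simp only [List.replicate_zero, List.append_nil] at hlen ⊢
        simp at hlen
        rw [hlen]
      · right
        refine ⟨(A, B), ?_, z₀, ⟨?_, hz₀⟩, rfl⟩
        · simp at hlen
          exact mem_Pn.mpr ⟨hA, hB, hAB, by omega⟩
        · simp at hlen
          omega
  · rintro (rfl | ⟨⟨a, b⟩, hp, z, ⟨hzlen, hzv⟩, rfl⟩)
    · refine ⟨by simp, ?_⟩
      have := ZV.blk n 0 [] hn (by omega) (fun _ => rfl) ZV.nil
      simpa using this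
    · obtain ⟨ha, hb, hab, habn⟩ := mem_Pn.mp hp
      refine ⟨by simp [hzlen]; omega, ?_⟩
      exact ZV.blk a b z ha hab (by omega) hzv

lemma Urec (n : ℕ) (hn : 1 ≤ n) : U n = 1 + ∑ p ∈ Pn n, U (n - (p.1 + p.2)) := by
  have hnm : List.replicate n false ∉
      (Pn n).biUnion (fun p => (Zf (n - (p.1 + p.2))).image
        (fun w => List.replicate p.1 false ++ List.replicate p.2 true ++ w)) := by
    rw [Finset.mem_biUnion]
    rintro ⟨⟨a, b⟩, hp, hmem⟩
    simp only [Finset.mem_image, mem_Zf] at hmem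
    obtain ⟨z, -, hz⟩ := hmem
    obtain ⟨-, hb, -, -⟩ := mem_Pn.mp hp
    have : (true : Bool) ∈ List.replicate n false := by
      rw [← hz]
      refine List.mem_append.mpr (Or.inl (List.mem_append.mpr (Or.inr ?_)))
      cases b with
      | zero => omega
      | succ m => simp [List.replicate_succ]
    simp [List.mem_replicate] at this
  have hdisj : ∀ p ∈ Pn n, ∀ q ∈ Pn n, p ≠ q →
      Disjoint ((Zf (n - (p.1 + p.2))).image
        (fun w => List.replicate p.1 false ++ List.replicate p.2 true ++ w))
        ((Zf (n - (q.1 + q.2))).image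
        (fun w => List.replicate q.1 false ++ List.replicate q.2 true ++ w)) := by
    rintro ⟨a, b⟩ hp ⟨c, d⟩ hq hne
    rw [Finset.disjoint_left]
    rintro x hx hx'
    simp only [Finset.mem_image, mem_Zf] at hx hx'
    obtain ⟨z1, ⟨h1l, h1v⟩, h1⟩ := hx
    obtain ⟨z2, ⟨h2l, h2v⟩, h2⟩ := hx'
    obtain ⟨ha, hb, -, -⟩ := mem_Pn.mp hp
    obtain ⟨hc, hd, -, -⟩ := mem_Pn.mp hq
    have := uniq hb hd (ZV_head h1v) (ZV_head h2v) (h1.trans h2.symm)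
    exact hne (by simp [this.1, this.2.1])
  rw [U, Zf_decomp n hn, Finset.card_insert_of_notMem hnm, Finset.card_biUnion hdisj,
    Nat.add_comm]
  congr 1
  refine Finset.sum_congr rfl fun p _ => ?_
  exact Finset.card_image_of_injective _ (fun x y h => List.append_cancel_left h)

lemma Wrec (n : ℕ) (hn : 1 ≤ n) : W n = W (n - 1) + U n := by
  have hdecomp : Vf n = ((Vf (n - 1)).image (true :: ·)) ∪ Zf n := by
    ext w
    simp only [Finset.mem_union, Finset.mem_image, mem_Vf, mem_Zf]
    constructor
    · rintro ⟨hlen, k, z, rfl, hz⟩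
      cases k with
      | zero => right; exact ⟨hlen, by simpa using hz⟩
      | succ m =>
        left
        refine ⟨List.replicate m true ++ z, ⟨?_, m, z, rfl, hz⟩, by simp [List.replicate_succ]⟩
        simp at hlen ⊢
        omega
    · rintro (⟨w', ⟨hlen, k, z, rfl, hz⟩, rfl⟩ | ⟨hlen, hz⟩)
      · refine ⟨by simp at hlen ⊢; omega, k + 1, z, by simp [List.replicate_succ], hz⟩
      · exact ⟨hlen, 0, w, by simp, hz⟩
  rw [W, hdecomp, Finset.card_union_of_disjoint, W, U,
    Finset.card_image_of_injective _ (fun x y h => by injection h)]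
  · rw [Finset.disjoint_left]
    rintro x hx hx'
    simp only [Finset.mem_image, mem_Vf] at hx
    obtain ⟨w', -, rfl⟩ := hx
    obtain ⟨hlen, hz⟩ := mem_Zf.mp hx'
    have := ZV_head hz
    simp at this

/-- number of valid inner blocks of length `ℓ` -/
def vv (ℓ : ℕ) : ℕ := if ℓ < 2 then 0 else ℓ - 1 - 2 * ℓ / 5

/-- periodic indicator -/
def ee (j : ℕ) : ℕ := if j % 5 = 1 ∨ j % 5 = 2 ∨ j % 5 = 4 then 1 else 0

lemma fiber_card {n ℓ : ℕ} (hl : ℓ ≤ n) :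
    ((Pn n).filter (fun p => p.1 + p.2 = ℓ)).card = vv ℓ := by
  have himg : (Pn n).filter (fun p => p.1 + p.2 = ℓ)
      = (Finset.Icc (2 * ℓ / 5 + 1) (ℓ - 1)).image (fun a => (a, ℓ - a)) := by
    ext ⟨x, y⟩
    simp only [Finset.mem_filter, Finset.mem_image, Finset.mem_Icc, Pn,
      Finset.mem_product, Finset.mem_range, Prod.mk.injEq]
    constructor
    · rintro ⟨⟨⟨hx, hy⟩, h1, h2, h3, h4⟩, h5⟩
      exact ⟨x, ⟨by omega, by omega⟩, rfl, by omega⟩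
    · rintro ⟨a, ⟨ha1, ha2⟩, rfl, rfl⟩
      refine ⟨⟨⟨?_, ?_⟩, ?_, ?_, ?_, ?_⟩, ?_⟩ <;> omega
  rw [himg, Finset.card_image_of_injOn
    (fun x _ y _ h => by simpa using congrArg Prod.fst h), Nat.card_Icc]
  simp only [vv]
  split <;> omega

lemma U0 : U 0 = 1 := by
  have : Zf 0 = {([] : List Bool)} := by
    ext w
    rw [mem_Zf]
    simp only [List.length_eq_zero_iff, Finset.mem_singleton]
    exact ⟨fun h => h.1, fun h => ⟨h, h ▸ ZV.nil⟩⟩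
  rw [U, this, Finset.card_singleton]

lemma W0 : W 0 = 1 := by
  have : Vf 0 = {([] : List Bool)} := by
    ext w
    rw [mem_Vf]
    simp only [List.length_eq_zero_iff, Finset.mem_singleton]
    exact ⟨fun h => h.1, fun h => ⟨h, h ▸ ⟨0, [], rfl, ZV.nil⟩⟩⟩
  rw [W, this, Finset.card_singleton]

lemma Urec' (n : ℕ) : U n = 1 + ∑ ℓ ∈ Finset.range (n + 1), vv ℓ * U (n - ℓ) := by
  cases n with
  | zero => simp [U0, vv]
  | succ m =>
    rw [Urec (m + 1) (by omega)]
    congr 1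
    have hmap : ∀ p ∈ Pn (m + 1), p.1 + p.2 ∈ Finset.range (m + 2) := by
      intro p hp
      rcases p with ⟨a, b⟩
      have := mem_Pn.mp hp
      simp only [Finset.mem_range]
      omega
    rw [← Finset.sum_fiberwise_of_maps_to hmap (fun p => U (m + 1 - (p.1 + p.2)))]
    refine Finset.sum_congr rfl fun ℓ hℓ => ?_
    have hcongr : ∀ p ∈ (Pn (m + 1)).filter (fun p => p.1 + p.2 = ℓ),
        U (m + 1 - (p.1 + p.2)) = U (m + 1 - ℓ) := fun p hp => by
      rw [(Finset.mem_filter.mp hp).2]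
    rw [Finset.sum_congr rfl hcongr, Finset.sum_const, smul_eq_mul,
      fiber_card (by simp at hℓ; omega)]

lemma vv_e (k : ℕ) (hk : k ≠ 1) : vv k = vv (k - 1) + ee k := by
  simp only [vv, ee]
  split_ifs <;> omega

lemma ee_one : ee 1 = 1 := by simp [ee]

lemma Ce (n : ℕ) (hn : 1 ≤ n) :
    U n = ∑ j ∈ Finset.range (n + 1), ee j * U (n - j) := by
  have hS1 : 1 + ∑ k ∈ Finset.range (n + 1), vv (k - 1) * U (n - k) = U (n - 1) := by
    rw [Finset.sum_range_succ']
    have h1 : ∀ i ∈ Finset.range n, vv (i + 1 - 1) * U (n - (i + 1))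
        = vv i * U (n - 1 - i) := by
      intro i hi
      rw [show i + 1 - 1 = i by omega, show n - (i + 1) = n - 1 - i by omega]
    rw [Finset.sum_congr rfl h1, show vv (0 - 1) * U (n - 0) = 0 from by simp [vv],
      Nat.add_zero]
    have h2 := Urec' (n - 1)
    rw [show n - 1 + 1 = n by omega] at h2
    omega
  have hb : (∑ k ∈ Finset.range (n + 1), vv (k - 1) * U (n - k))
      + (∑ j ∈ Finset.range (n + 1), ee j * U (n - j))
      = (∑ k ∈ Finset.range (n + 1), vv k * U (n - k)) + U (n - 1) := by
    rw [← Finset.sum_add_distrib]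
    have h2 : ∀ k ∈ Finset.range (n + 1), vv (k - 1) * U (n - k) + ee k * U (n - k)
        = vv k * U (n - k) + (if k = 1 then U (n - 1) else 0) := by
      intro k hk
      by_cases h1 : k = 1
      · subst h1
        simp [vv, ee]
      · rw [if_neg h1, ← add_mul, ← vv_e k h1, Nat.add_zero]
    rw [Finset.sum_congr rfl h2, Finset.sum_add_distrib,
      Finset.sum_ite_eq' (Finset.range (n + 1)) 1 (fun _ => U (n - 1)),
      if_pos (by simp; omega)]
  have ha := Urec' n
  omega

lemma ee_per (i : ℕ) : ee (i + 5) = ee i := by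
  simp only [ee, Nat.add_mod_right]

lemma Cp (n : ℕ) (hn : 6 ≤ n) :
    U n = U (n - 1) + U (n - 2) + U (n - 4) + U (n - 5) := by
  have h1 := Ce n (by omega)
  have hsplit : Finset.range (n + 1) = Finset.Ico 0 6 ∪ Finset.Ico 6 (n + 1) := by
    rw [Finset.range_eq_Ico]
    exact (Finset.Ico_union_Ico_eq_Ico (by omega) (by omega)).symm
  rw [hsplit, Finset.sum_union (by
    rw [Finset.disjoint_left]
    intro x hx hx'
    simp at hx hx'
    omega)] at h1
  have hfirst : ∑ j ∈ Finset.Ico 0 6, ee j * U (n - j)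
      = U (n - 1) + U (n - 2) + U (n - 4) := by
    rw [← Finset.range_eq_Ico]
    rw [Finset.sum_range_succ, Finset.sum_range_succ, Finset.sum_range_succ,
      Finset.sum_range_succ, Finset.sum_range_succ, Finset.sum_range_succ,
      Finset.sum_range_zero]
    norm_num [ee]
  have hsecond : ∑ j ∈ Finset.Ico 6 (n + 1), ee j * U (n - j) = U (n - 5) := by
    rw [Finset.sum_Ico_eq_sum_range]
    have h2 := Ce (n - 5) (by omega)
    rw [show n - 5 + 1 = n - 5 + 1 by rfl] at h2
    rw [Finset.sum_range_succ'] at h2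
    rw [show ee 0 * U (n - 5 - 0) = 0 from by simp [ee], Nat.add_zero] at h2
    have h3 : ∑ k ∈ Finset.range (n + 1 - 6), ee (6 + k) * U (n - (6 + k))
        = ∑ i ∈ Finset.range (n - 5), ee (i + 1) * U (n - 5 - (i + 1)) := by
      rw [show n + 1 - 6 = n - 5 by omega]
      refine Finset.sum_congr rfl fun k hk => ?_
      rw [show 6 + k = (k + 1) + 5 by omega, ee_per,
        show n - (k + 1 + 5) = n - 5 - (k + 1) by omega]
    rw [h3, ← h2]
  rw [hfirst, hsecond] at h1
  omega

lemma U1 : U 1 = 1 := by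
  rw [Urec' 1]; norm_num [Finset.sum_range_succ, vv, U0]
lemma U2 : U 2 = 2 := by
  rw [Urec' 2]; norm_num [Finset.sum_range_succ, vv, U0, U1]
lemma U3 : U 3 = 3 := by
  rw [Urec' 3]; norm_num [Finset.sum_range_succ, vv, U0, U1, U2]
lemma U4 : U 4 = 6 := by
  rw [Urec' 4]; norm_num [Finset.sum_range_succ, vv, U0, U1, U2, U3]
lemma U5 : U 5 = 10 := by
  rw [Urec' 5]; norm_num [Finset.sum_range_succ, vv, U0, U1, U2, U3, U4]
lemma U6 : U 6 = 19 := by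
  rw [Cp 6 (by omega)]; norm_num [U1, U2, U4, U5]
lemma U7 : U 7 = 34 := by
  rw [Cp 7 (by omega)]; norm_num [U2, U3, U5, U6]
lemma U8 : U 8 = 62 := by
  rw [Cp 8 (by omega)]; norm_num [U3, U4, U6, U7]

lemma W1 : W 1 = 2 := by rw [Wrec 1 (by omega)]; norm_num [W0, U1]
lemma W2 : W 2 = 4 := by rw [Wrec 2 (by omega)]; norm_num [W1, U2]
lemma W3 : W 3 = 7 := by rw [Wrec 3 (by omega)]; norm_num [W2, U3]
lemma W4 : W 4 = 13 := by rw [Wrec 4 (by omega)]; norm_num [W3, U4]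
lemma W5 : W 5 = 23 := by rw [Wrec 5 (by omega)]; norm_num [W4, U5]
lemma W6 : W 6 = 42 := by rw [Wrec 6 (by omega)]; norm_num [W5, U6]
lemma W7 : W 7 = 76 := by rw [Wrec 7 (by omega)]; norm_num [W6, U7]
lemma W8 : W 8 = 138 := by rw [Wrec 8 (by omega)]; norm_num [W7, U8]

lemma Dd : ∀ n, 5 ≤ n → U n = W (n - 2) + W (n - 4) + W (n - 5) := by
  refine Nat.le_induction ?_ ?_
  · norm_num [U5, W3, W1, W0]
  · intro n hn ih
    have hc := Cp (n + 1) (by omega)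
    rw [show n + 1 - 1 = n by omega, show n + 1 - 2 = n - 1 by omega,
      show n + 1 - 4 = n - 3 by omega, show n + 1 - 5 = n - 4 by omega] at hc
    have w1 := Wrec (n - 1) (by omega)
    rw [show n - 1 - 1 = n - 2 by omega] at w1
    have w3 := Wrec (n - 3) (by omega)
    rw [show n - 3 - 1 = n - 4 by omega] at w3
    have w4 := Wrec (n - 4) (by omega)
    rw [show n - 4 - 1 = n - 5 by omega] at w4
    rw [show n + 1 - 2 = n - 1 by omega, show n + 1 - 4 = n - 3 by omega,
      show n + 1 - 5 = n - 4 by omega]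
    omega

lemma wcount_eq (n : ℕ) : wcount 3 2 n = W n := by
  have e : {w : List Bool // w.length = n ∧ isValid 3 2 w} ≃ {w : List Bool // w ∈ Vf n} :=
    Equiv.subtypeEquivRight (fun w => by rw [mem_Vf, isValid_iff_Vp])
  rw [wcount, Nat.card_congr e, Nat.card_eq_finsetCard, W]

theorem stmt3 :
    (∀ n : ℕ, 5 ≤ n →
      wcount 3 2 n =
        wcount 3 2 (n - 1) + wcount 3 2 (n - 2) + wcount 3 2 (n - 4) + wcount 3 2 (n - 5)) ∧
    wcount 3 2 0 = 1 ∧ wcount 3 2 1 = 2 ∧ wcount 3 2 2 = 4 ∧ wcount 3 2 3 = 7 ∧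
    wcount 3 2 4 = 13 ∧ wcount 3 2 5 = 23 ∧ wcount 3 2 6 = 42 ∧ wcount 3 2 7 = 76 ∧
    wcount 3 2 8 = 138 := by
  refine ⟨?_, ?_, ?_, ?_, ?_, ?_, ?_, ?_, ?_, ?_⟩
  · intro n hn
    rw [wcount_eq, wcount_eq, wcount_eq, wcount_eq, wcount_eq]
    have h1 := Wrec n (by omega)
    have h2 := Dd n hn
    omega
  all_goals rw [wcount_eq]
  exacts [W0, W1, W2, W3, W4, W5, W6, W7, W8]
end

section
/- Every nonempty word in W_q (for positive rational q) either is of the form 1^n, or decomposes uniquely as w = p·s where s = 0^{1+⌊i/q⌋}·1^i for some i ≥ 0 and p ∈ W_q. In other words, W_q satisfies the unambiguous decomposition W_q = {1^k : k ≥ 0} ∪ W_q · S_q, where S_q = {0^{1+⌊i/q⌋} 1^i : i ≥ 0}. -/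
lemma repl_head (x : Bool) (n : ℕ) (t : List Bool) (hn : 0 < n) :
    (List.replicate n x ++ t).head? = some x := by
  cases n with
  | zero => omega
  | succ n => simp [List.replicate_succ]

lemma repl_head' (x : Bool) (n : ℕ) (hn : 0 < n) :
    (List.replicate n x).head? = some x := by
  cases n with
  | zero => omega
  | succ n => simp [List.replicate_succ]

lemma dropWhile_head_not {α} (p : α → Bool) (l : List α) (x : α) (xs : List α)
    (h : l.dropWhile p = x :: xs) : p x = false := by
  induction l with
  | nil => simp at h
  | cons y ys ih =>
    rw [List.dropWhile_cons] at h
    by_cases hy : p y = true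
    · rw [if_pos hy] at h; exact ih h
    · rw [if_neg hy] at h
      cases h
      simpa using hy

lemma repl_pref_le (x : Bool) (k n : ℕ) (t1 t2 : List Bool)
    (h : List.replicate k x ++ t1 = List.replicate n x ++ t2)
    (h2 : t2 = [] ∨ t2.head? ≠ some x) : k ≤ n := by
  by_contra hlt
  push_neg at hlt
  have hk : List.replicate k x = List.replicate n x ++ List.replicate (k - n) x := by
    rw [← List.replicate_add]; congr 1; omega
  rw [hk, List.append_assoc] at h
  have ht2 : t2 = List.replicate (k - n) x ++ t1 := (List.append_cancel_left h).symm
  have hh : t2.head? = some x := by rw [ht2]; exact repl_head _ _ _ (by omega)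
  rcases h2 with h2 | h2
  · rw [h2] at hh; simp at hh
  · exact h2 hh

lemma repl_pref_eq (x : Bool) (k n : ℕ) (t1 t2 : List Bool)
    (h : List.replicate k x ++ t1 = List.replicate n x ++ t2)
    (h1 : t1 = [] ∨ t1.head? ≠ some x)
    (h2 : t2 = [] ∨ t2.head? ≠ some x) : k = n ∧ t1 = t2 := by
  have hkn : k = n :=
    le_antisymm (repl_pref_le x k n t1 t2 h h2) (repl_pref_le x n k t2 t1 h.symm h1)
  subst hkn
  exact ⟨rfl, List.append_cancel_left h⟩

lemma ones_valid (c d k : ℕ) : isValid c d (List.replicate k true) := by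
  intro p s a b E hp hs ha
  exfalso
  have hmem : false ∈ List.replicate k true := by
    rw [E]
    have : false ∈ List.replicate a false := by
      cases a with
      | zero => omega
      | succ a => simp [List.replicate_succ]
    simp only [List.mem_append]
    tauto
  simp at hmem

lemma dropOnes (c d i : ℕ) (v : List Bool)
    (h : isValid c d (v ++ List.replicate i true)) : isValid c d v := by
  intro p s a b E hp hs ha
  rcases hs with hs | hs
  · subst hs
    have key := h p [] a (b + i) ?_ hp (Or.inl rfl) ha
    · have : d * b ≤ d * (b + i) := Nat.mul_le_mul_left d (by omega)
      omega
    · rw [E, List.replicate_add]; simp [List.append_assoc]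
  · cases s with
    | nil => simp at hs
    | cons x xs =>
      have hx : x = false := by simpa using hs
      subst hx
      have key := h p (false :: xs ++ List.replicate i true) a b ?_ hp ?_ ha
      · exact key
      · rw [E]; simp [List.append_assoc]
      · right; rfl

lemma dropZeros (c d k : ℕ) (hc : 0 < c) (v : List Bool)
    (h : isValid c d (v ++ List.replicate k false)) : isValid c d v := by
  intro p s a b E hp hs ha
  rcases hs with hs | hs
  · subst hs
    have hsuf : List.replicate k false = [] ∨
        (List.replicate k false).head? = some false := by
      cases k with
      | zero => left; rfl
      | succ k => right; simp [List.replicate_succ]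
    refine h p (List.replicate k false) a b ?_ hp hsuf ha
    rw [E]; simp [List.append_assoc]
  · cases s with
    | nil => simp at hs
    | cons x xs =>
      have hx : x = false := by simpa using hs
      subst hx
      refine h p (false :: xs ++ List.replicate k false) a b ?_ hp (Or.inr rfl) ha
      rw [E]; simp [List.append_assoc]

lemma appendBlock (c d m i : ℕ) (u : List Bool) (hc : 0 < c)
    (hu : isValid c d u) (hm : 0 < m) (hmi : d * i < c * m) :
    isValid c d (u ++ List.replicate m false ++ List.replicate i true) := by
  intro p s a b E hp hs ha
  rcases Nat.eq_zero_or_pos b with hb | hb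
  · subst hb; simpa using Nat.mul_pos hc ha
  have E' : (p ++ List.replicate a false ++ List.replicate b true) ++ s
      = (u ++ List.replicate m false) ++ List.replicate i true := by
    rw [E]
  rcases List.append_eq_append_iff.mp E' with ⟨w', hw1, hw2⟩ | ⟨w', hw1, hw2⟩
  · -- u ++ 0^m = (p ++ 0^a ++ 1^b) ++ w',  s = w' ++ 1^i
    rcases List.append_eq_append_iff.mp hw1.symm with ⟨v, hv1, hv2⟩ | ⟨v, hv1, hv2⟩
    · -- u = (p ++ 0^a ++ 1^b) ++ v, w' = v ++ 0^m
      refine hu p v a b ?_ hp ?_ ha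
      · rw [hv1]
      · cases v with
        | nil => left; rfl
        | cons x xs =>
          right
          have hsne : s ≠ [] := by
            rw [hw2, hv2]; simp
          have hshead : s.head? = some false := hs.resolve_left hsne
          have hsx : s.head? = some x := by rw [hw2, hv2]; rfl
          rw [hsx] at hshead
          simpa using hshead
    · -- p ++ 0^a ++ 1^b = u ++ v, 0^m = v ++ w'
      cases v with
      | nil =>
        refine hu p [] a b ?_ hp (Or.inl rfl) ha
        simp only [List.append_nil] at hv1 ⊢
        exact hv1.symm
      | cons x xs =>
        exfalso
        have hvrep : x :: xs = List.replicate (xs.length + 1) false := by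
          rw [List.eq_replicate_iff]
          refine ⟨by simp, fun y hy => ?_⟩
          have hy' : y ∈ List.replicate m false := by
            rw [hv2]
            exact List.mem_append_left _ hy
          simpa using List.eq_of_mem_replicate hy'
        rw [hvrep] at hv1
        have hrev := congrArg List.reverse hv1
        simp only [List.reverse_append, List.reverse_replicate, List.append_assoc] at hrev
        have h1 : (List.replicate b true ++
            (List.replicate a false ++ p.reverse)).head? = some true :=
          repl_head true b _ hb
        rw [hrev] at h1
        rw [repl_head false (xs.length + 1) u.reverse (Nat.succ_pos _)] at h1
        simp at h1
  · -- p ++ 0^a ++ 1^b = (u ++ 0^m) ++ w',  1^i = w' ++ s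
    have hs' : s = [] := by
      rcases hs with hs | hs
      · exact hs
      · exfalso
        cases s with
        | nil => simp at hs
        | cons x xs =>
          have hx : x = false := by simpa using hs
          have : x ∈ List.replicate i true := by
            rw [hw2]; simp
          simp [hx] at this
    subst hs'
    simp only [List.append_nil] at hw2
    rw [← hw2] at hw1
    -- p ++ 0^a ++ 1^b = u ++ 0^m ++ 1^i
    have hrev := congrArg List.reverse hw1
    simp only [List.reverse_append, List.reverse_replicate, List.append_assoc] at hrev
    obtain ⟨hbi, htail⟩ := repl_pref_eq true b i _ _ hrev
      (Or.inr (by rw [repl_head false a _ ha]; simp))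
      (Or.inr (by rw [repl_head false m _ hm]; simp))
    have ham : m ≤ a := by
      refine repl_pref_le false m a u.reverse p.reverse htail.symm ?_
      rcases hp with hp | hp
      · left; rw [hp]; rfl
      · right; rw [List.head?_reverse, hp]; simp
    calc d * b = d * i := by rw [hbi]
      _ < c * m := hmi
      _ ≤ c * a := Nat.mul_le_mul_left c ham

lemma decomp (w : List Bool) (hw : false ∈ w) :
    ∃ u i m, 0 < m ∧ (u = [] ∨ u.getLast? = some true) ∧
      w = u ++ List.replicate m false ++ List.replicate i true := by
  set r := w.reverse with hr
  set r1 := r.takeWhile (fun x => x) with hr1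
  set r2 := r.dropWhile (fun x => x) with hr2
  have hsplit : r1 ++ r2 = r := List.takeWhile_append_dropWhile
  have hr1rep : r1 = List.replicate r1.length true := by
    rw [List.eq_replicate_iff]
    exact ⟨rfl, fun b hb => by simpa using List.mem_takeWhile_imp hb⟩
  have hr2ne : r2 ≠ [] := by
    intro h
    have : false ∈ r := by rw [hr]; simpa using hw
    rw [← hsplit, h, List.append_nil, hr1rep] at this
    simp at this
  have hr2head : r2.head? = some false := by
    cases h2 : r2 with
    | nil => exact absurd h2 hr2ne
    | cons x xs =>
      have hx : x = false := by
        have := dropWhile_head_not (fun x : Bool => x) r x xs (by rw [← hr2]; exact h2)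
        simpa using this
      simp [hx]
  set r3 := r2.dropWhile (fun x => !x) with hr3
  set m := (r2.takeWhile (fun x => !x)).length with hm
  have hsplit2 : r2.takeWhile (fun x => !x) ++ r3 = r2 := List.takeWhile_append_dropWhile
  have hm2rep : r2.takeWhile (fun x => !x) = List.replicate m false := by
    rw [List.eq_replicate_iff]
    exact ⟨rfl, fun b hb => by simpa using List.mem_takeWhile_imp hb⟩
  have hmpos : 0 < m := by
    cases h2 : r2 with
    | nil => exact absurd h2 hr2ne
    | cons x xs =>
      have hx : x = false := by rw [h2] at hr2head; simpa using hr2head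
      rw [hm, h2, hx]
      simp [List.takeWhile_cons]
  have hr3head : r3 = [] ∨ r3.head? = some true := by
    cases h3 : r3 with
    | nil => left; rfl
    | cons x xs =>
      right
      have hx : x = true := by
        have := dropWhile_head_not (fun x : Bool => !x) r2 x xs (by rw [← hr3]; exact h3)
        simpa using this
      simp [hx]
  refine ⟨r3.reverse, r1.length, m, hmpos, ?_, ?_⟩
  · rcases hr3head with h3 | h3
    · left; rw [h3]; rfl
    · right; rw [List.getLast?_reverse]; exact h3
  · have : w = r.reverse := by rw [hr, List.reverse_reverse]
    rw [this, ← hsplit, ← hsplit2, hr1rep, hm2rep]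
    simp [List.reverse_append, List.append_assoc]

lemma valid_bound (c : ℕ) (hc : 0 < c) (d i m : ℕ) (h : d * i < c * m) :
    1 + i * d / c ≤ m := by
  have : i * d / c < m := by
    rw [Nat.div_lt_iff_lt_mul hc]
    calc i * d = d * i := Nat.mul_comm _ _
      _ < c * m := h
      _ = m * c := Nat.mul_comm _ _
  omega

theorem stmt7 (c d : ℕ) (hc : 0 < c) (hd : 0 < d) (hcd : Nat.Coprime c d) :
    (∀ w : List Bool, isValid c d w →
      (∃ k : ℕ, w = List.replicate k true) ∨
      (∃! ps : List Bool × ℕ, isValid c d ps.1 ∧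
        w = ps.1 ++ List.replicate (1 + ps.2 * d / c) false ++ List.replicate ps.2 true)) ∧
    (∀ p : List Bool, ∀ i : ℕ, isValid c d p →
      isValid c d (p ++ List.replicate (1 + i * d / c) false ++ List.replicate i true)) ∧
    (∀ k : ℕ, isValid c d (List.replicate k true)) := by
  refine ⟨?_, ?_, ones_valid c d⟩
  · intro w hw
    by_cases hall : ∀ x ∈ w, x = true
    · left
      exact ⟨w.length, List.eq_replicate_iff.mpr ⟨rfl, hall⟩⟩
    · right
      have hfalse : false ∈ w := by
        push_neg at hall
        obtain ⟨x, hx, hxne⟩ := hall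
        have : x = false := by cases x <;> simp_all
        rwa [← this]
      obtain ⟨u, i, m, hmpos, hu, hweq⟩ := decomp w hfalse
      have hdi : d * i < c * m := by
        refine hw u [] m i ?_ hu (Or.inl rfl) hmpos
        rw [hweq]; simp
      set m0 := 1 + i * d / c with hm0
      have hm0le : m0 ≤ m := valid_bound c hc d i m hdi
      set p := u ++ List.replicate (m - m0) false with hp
      have hweq2 : w = p ++ List.replicate m0 false ++ List.replicate i true := by
        rw [hweq, hp]
        rw [show List.replicate m (false : Bool)
            = List.replicate (m - m0) false ++ List.replicate m0 false by
          rw [← List.replicate_add]; congr 1; omega]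
        simp [List.append_assoc]
      have hpvalid : isValid c d p := by
        have h1 : isValid c d (p ++ List.replicate m0 false) := by
          refine dropOnes c d i _ ?_
          rw [← hweq2]
          exact hw
        exact dropZeros c d m0 hc p h1
      refine ⟨(p, i), ⟨hpvalid, hweq2⟩, ?_⟩
      rintro ⟨p', i'⟩ ⟨hv', he'⟩
      simp only at he' ⊢
      -- w = p' ++ 0^{1+i'*d/c} ++ 1^{i'} = p ++ 0^{m0} ++ 1^i
      set m0' := 1 + i' * d / c with hm0'
      have heq : p' ++ List.replicate m0' false ++ List.replicate i' true
          = p ++ List.replicate m0 false ++ List.replicate i true := by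
        rw [← he', ← hweq2]
      have hrev := congrArg List.reverse heq
      simp only [List.reverse_append, List.reverse_replicate, List.append_assoc] at hrev
      have hm0'pos : 0 < m0' := Nat.lt_of_lt_of_le Nat.one_pos (Nat.le_add_right 1 _)
      have hm0pos : 0 < m0 := Nat.lt_of_lt_of_le Nat.one_pos (Nat.le_add_right 1 _)
      obtain ⟨hii, htail⟩ := repl_pref_eq true i' i _ _ hrev
        (Or.inr (by rw [repl_head false m0' _ hm0'pos]; simp))
        (Or.inr (by rw [repl_head false m0 _ hm0pos]; simp))
      have hmm : m0' = m0 := by rw [hm0', hm0, hii]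
      rw [hmm] at htail
      have hpp : p'.reverse = p.reverse := List.append_cancel_left htail
      have : p' = p := by
        have := congrArg List.reverse hpp
        simpa using this
      rw [Prod.mk.injEq]
      exact ⟨this, hii⟩
  · intro p i hp
    refine appendBlock c d (1 + i * d / c) i p hc hp
      (Nat.lt_of_lt_of_le Nat.one_pos (Nat.le_add_right 1 _)) ?_
    have h1 : i * d / c < i * d / c + 1 := Nat.lt_succ_self _
    rw [Nat.div_lt_iff_lt_mul hc] at h1
    calc d * i = i * d := Nat.mul_comm _ _
      _ < (i * d / c + 1) * c := h1
      _ = c * (1 + i * d / c) := by ring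
end
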